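/- Let (L_n)_{n<ω} be a countable family of linear orders, each admitting a strictly order-preserving map into ([0,1]^{<ω₁}_{↘0}, <_altlex). Then the lexicographic product ∏_{n<ω} L_n also admits a strictly order-preserving map into ([0,1]^{<ω₁}_{↘0}, <_altlex). -/

import Mathlib

open Ordinal Set

noncomputable section

/-- Parity of an ordinal: `a = γ + n` with `γ` limit, `n < ω`; even iff `n` is even. -/
def OrdEven (a : Ordinal) : Prop := a % 2 = 0

/-- Upper semicontinuity. -/
def USC {X : Type} [TopologicalSpace X] (f : X → ℝ) : Prop :=
  ∀ r : ℝ, IsOpen (f ⁻¹' Set.Iio r)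

/-- The least ordinal where two transfinite sequences differ. -/
def dOrd (f g : Ordinal → ℝ) : Ordinal := sInf {a | f a ≠ g a}

/-- The alternating lexicographical order on transfinite sequences of reals. -/
def AltLex (f g : Ordinal → ℝ) : Prop :=
  f ≠ g ∧ ((OrdEven (dOrd f g) ∧ f (dOrd f g) < g (dOrd f g)) ∨
    (¬ OrdEven (dOrd f g) ∧ g (dOrd f g) < f (dOrd f g)))

/-- `f` encodes a strictly decreasing countable transfinite sequence in `[0,1]`
with last element `0` at index `ξ` (padded with `0` beyond `ξ`). -/
def IsDSeqLen (f : Ordinal → ℝ) (ξ : Ordinal) : Prop :=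
  ξ < (Cardinal.aleph 1).ord ∧ (∀ a, f a ∈ Set.Icc (0:ℝ) 1) ∧
  (∀ a b, a < b → b ≤ ξ → f b < f a) ∧ (∀ a, ξ ≤ a → f a = 0)

/-- Membership in `[0,1]^{<ω₁}_{↘0}`. -/
def IsDSeq (f : Ordinal → ℝ) : Prop := ∃ ξ, IsDSeqLen f ξ

namespace S15

open Classical in

/-! ### Real-number helpers -/

def tv (n : ℕ) : ℝ := (4:ℝ)⁻¹ ^ n
def sv (n : ℕ) : ℝ := 2 * (4:ℝ)⁻¹ ^ (n+1)
def qv (n : ℕ) : ℝ := (3/2) * (4:ℝ)⁻¹ ^ (n+1)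
def TT (n : ℕ) (v : ℝ) : ℝ := sv n + v * (tv n - sv n)

lemma pow4_pos (n : ℕ) : (0:ℝ) < (4:ℝ)⁻¹ ^ n := by positivity

lemma tv_pos (n : ℕ) : 0 < tv n := pow4_pos n

lemma sv_lt_tv (n : ℕ) : sv n < tv n := by
  have := pow4_pos n
  simp only [sv, tv, pow_succ]
  nlinarith

lemma tv_lt_qv (n : ℕ) : tv (n+1) < qv n := by
  have := pow4_pos (n+1)
  simp only [tv, qv]; nlinarith

lemma qv_lt_sv (n : ℕ) : qv n < sv n := by
  have := pow4_pos (n+1)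
  simp only [qv, sv]; nlinarith

lemma tv_antitone {m n : ℕ} (h : m ≤ n) : tv n ≤ tv m :=
  pow_le_pow_of_le_one (by norm_num) (by norm_num) h

lemma tv_le_one (n : ℕ) : tv n ≤ 1 :=
  pow_le_one₀ (by norm_num) (by norm_num)

lemma TT_strictMono (n : ℕ) {v w : ℝ} (h : v < w) : TT n v < TT n w := by
  have := sv_lt_tv n
  simp only [TT]; nlinarith

lemma sv_le_TT (n : ℕ) {v : ℝ} (h : 0 ≤ v) : sv n ≤ TT n v := by
  have := sv_lt_tv n
  simp only [TT]; nlinarith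

lemma sv_lt_TT (n : ℕ) {v : ℝ} (h : 0 < v) : sv n < TT n v := by
  have := sv_lt_tv n
  simp only [TT]; nlinarith

lemma TT_le_tv (n : ℕ) {v : ℝ} (h : v ≤ 1) : TT n v ≤ tv n := by
  have := sv_lt_tv n
  simp only [TT]; nlinarith

/-! ### Ordinal parity -/

lemma mod2_cases (a : Ordinal) : a % 2 = 0 ∨ a % 2 = 1 := by
  have h : a % 2 < 2 := Ordinal.mod_lt a (by norm_num)
  have h2 : a % 2 < Order.succ (1:Ordinal) := by
    rwa [show Order.succ (1:Ordinal) = 2 by rw [← Ordinal.add_one_eq_succ]; norm_num]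
  exact Ordinal.le_one_iff.mp (Order.lt_succ_iff.mp h2)

lemma even_add {a : Ordinal} (h : a % 2 = 0) (b : Ordinal) : (a + b) % 2 = b % 2 := by
  conv_lhs => rw [← Ordinal.div_add_mod a 2, h, add_zero]
  exact Ordinal.mul_add_mod_self 2 (a / 2) b

example (c b : Ordinal) : (2 * c + b) % 2 = b % 2 := Ordinal.mul_add_mod_self 2 c b

/-! ### dOrd helpers -/

lemma dOrd_ne {f g : Ordinal → ℝ} (h : f ≠ g) :
    f (dOrd f g) ≠ g (dOrd f g) :=
  csInf_mem (Function.ne_iff.mp h)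

lemma dOrd_min {f g : Ordinal → ℝ} {e : Ordinal} (h : e < dOrd f g) : f e = g e := by
  by_contra hne
  exact absurd (csInf_le (OrderBot.bddBelow _) (show e ∈ {a | f a ≠ g a} from hne)) (not_le.mpr h)

lemma dOrd_eq {f g : Ordinal → ℝ} {c : Ordinal} (hc : f c ≠ g c)
    (hlt : ∀ e < c, f e = g e) : dOrd f g = c := by
  refine le_antisymm (csInf_le (OrderBot.bddBelow _) (show c ∈ {a | f a ≠ g a} from hc)) (le_csInf ⟨c, show c ∈ {a | f a ≠ g a} from hc⟩ ?_)
  intro e he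
  by_contra hec
  exact he (hlt e (not_le.mp hec))


/-! ### Padded length -/

def elen (x : Ordinal) : Ordinal := if x % 2 = 0 then x else x + 1

lemma le_elen (x : Ordinal) : x ≤ elen x := by
  unfold elen; split
  · exact le_refl x
  · exact le_of_lt (lt_add_one x)

lemma elen_even (x : Ordinal) : elen x % 2 = 0 := by
  unfold elen; split
  · assumption
  · rcases mod2_cases x with h | h
    · simp_all
    · have : x + 1 = 2 * (x / 2 + 1) := by
        conv_lhs => rw [← Ordinal.div_add_mod x 2, h]
        rw [mul_add, mul_one, add_assoc]
        norm_num
      rw [this]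
      simpa using Ordinal.mul_add_mod_self 2 (x / 2 + 1) 0

lemma elen_lt_omega1 {x : Ordinal} (h : x < (Cardinal.aleph 1).ord) :
    elen x < (Cardinal.aleph 1).ord := by
  unfold elen; split
  · exact h
  · rw [Cardinal.lt_ord] at h ⊢
    rw [Ordinal.card_add, Ordinal.card_one]
    exact Cardinal.add_lt_of_lt (Cardinal.aleph0_le_aleph 1) h
      (lt_of_lt_of_le Cardinal.one_lt_aleph0 (Cardinal.aleph0_le_aleph 1))

/-! ### Blocks and gluing -/

def blk (n : ℕ) (f : Ordinal → ℝ) (x : Ordinal) (e : Ordinal) : ℝ :=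
  if e < x then TT n (f e) else qv n

def ofs (x : ℕ → Ordinal) : ℕ → Ordinal
  | 0 => 0
  | n+1 => ofs x n + elen (x n)

open Classical in
def glue (F : ℕ → Ordinal → ℝ) (x : ℕ → Ordinal) (a : Ordinal) : ℝ :=
  if h : ∃ n, a < ofs x (n+1) then
    blk (Nat.find h) (F (Nat.find h)) (x (Nat.find h)) (a - ofs x (Nat.find h))
  else 0

lemma ofs_mono (x : ℕ → Ordinal) : Monotone (ofs x) :=
  monotone_nat_of_le_succ fun n => le_self_add

lemma ofs_even (x : ℕ → Ordinal) : ∀ n, ofs x n % 2 = 0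
  | 0 => by simp [ofs]
  | n+1 => by
    rw [ofs, even_add (ofs_even x n)]
    exact elen_even _

lemma ofs_lt_omega1 (x : ℕ → Ordinal) (hx : ∀ n, x n < (Cardinal.aleph 1).ord) :
    ∀ n, ofs x n < (Cardinal.aleph 1).ord
  | 0 => by
    rw [show ofs x 0 = 0 from rfl]
    exact Cardinal.lt_ord.mpr (by simpa using Cardinal.aleph_pos 1)
  | n+1 => by
    rw [ofs, Cardinal.lt_ord, Ordinal.card_add]
    exact Cardinal.add_lt_of_lt (Cardinal.aleph0_le_aleph 1)
      (Cardinal.lt_ord.mp (ofs_lt_omega1 x hx n))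
      (Cardinal.lt_ord.mp (elen_lt_omega1 (hx n)))

/-- Blocks values bounds. -/
lemma blk_bounds {n : ℕ} {f : Ordinal → ℝ} {x : Ordinal} (hf : IsDSeqLen f x)
    {e : Ordinal} (he : e < elen x) :
    tv (n+1) < blk n f x e ∧ blk n f x e ≤ tv n := by
  unfold blk; split
  case isTrue hlt =>
    have hfe0 : 0 < f e := by
      have h1 : f x < f e := hf.2.2.1 e x hlt le_rfl
      have h2 : f x = 0 := hf.2.2.2 x le_rfl
      linarith
    have hfe1 : f e ≤ 1 := (hf.2.1 e).2
    exact ⟨lt_trans (tv_lt_qv n) (lt_trans (qv_lt_sv n) (sv_lt_TT n hfe0)),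
      TT_le_tv n hfe1⟩
  case isFalse =>
    exact ⟨tv_lt_qv n, le_of_lt (lt_trans (qv_lt_sv n) (sv_lt_tv n))⟩

/-- within a block: strictly decreasing -/
lemma blk_strict {n : ℕ} {f : Ordinal → ℝ} {x : Ordinal} (hf : IsDSeqLen f x)
    {e e' : Ordinal} (hee : e < e') (he' : e' < elen x) :
    blk n f x e' < blk n f x e := by
  unfold blk
  by_cases h2 : e' < x
  · rw [if_pos h2, if_pos (lt_trans hee h2)]
    exact TT_strictMono n (hf.2.2.1 e e' hee (le_of_lt h2))
  · -- padding position: x ≤ e' < elen x, so elen x = x + 1 and e' = x, e < x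
    rw [if_neg h2]
    have hxle : x ≤ e' := not_lt.mp h2
    have helen : elen x = x + 1 := by
      rcases mod2_cases x with hp | hp
      · exfalso
        rw [elen, if_pos hp] at he'
        exact absurd (lt_of_le_of_lt hxle he') (lt_irrefl x)
      · rw [elen, if_neg (by rw [hp]; exact one_ne_zero)]
    have he'x : e' = x := by
      rw [helen] at he'
      have := Order.lt_succ_iff.mp (by rwa [Ordinal.add_one_eq_succ] at he')
      exact le_antisymm this hxle
    have hex : e < x := he'x ▸ hee
    rw [if_pos hex]
    have hfe0 : 0 < f e := by
      have h1 : f x < f e := hf.2.2.1 e x hex le_rfl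
      have h2 : f x = 0 := hf.2.2.2 x le_rfl
      linarith
    exact lt_trans (qv_lt_sv n) (sv_lt_TT n hfe0)

/-- `Nat.find` offset is below `a`. -/
lemma ofs_find_le {x : ℕ → Ordinal} {a : Ordinal} (ha : ∃ n, a < ofs x (n+1)) :
    ofs x (Nat.find ha) ≤ a := by
  cases h : Nat.find ha with
  | zero => exact zero_le
  | succ m =>
    by_contra hlt
    exact Nat.find_min ha (h ▸ m.lt_succ_self) (not_le.mp hlt)

lemma find_eq {x : ℕ → Ordinal} {a : Ordinal} (ha : ∃ n, a < ofs x (n+1))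
    {n : ℕ} (h1 : ofs x n ≤ a) (h2 : a < ofs x (n+1)) : Nat.find ha = n := by
  refine le_antisymm (Nat.find_min' ha h2) ?_
  by_contra hlt
  have hf : Nat.find ha + 1 ≤ n := by omega
  exact absurd (lt_of_lt_of_le (Nat.find_spec ha) (ofs_mono x hf)) (not_lt.mpr h1)

lemma glue_block {F : ℕ → Ordinal → ℝ} {x : ℕ → Ordinal} {a : Ordinal} {n : ℕ}
    (h1 : ofs x n ≤ a) (h2 : a < ofs x (n+1)) :
    glue F x a = blk n (F n) (x n) (a - ofs x n) := by
  rw [glue, dif_pos ⟨n, h2⟩]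
  rw [find_eq ⟨n, h2⟩ h1 h2]

/-- Values beyond offset `n` are at most `tv n`. -/
lemma glue_le {F : ℕ → Ordinal → ℝ} {x : ℕ → Ordinal}
    (hx : ∀ k, IsDSeqLen (F k) (x k)) {a : Ordinal} {n : ℕ} (hn : ofs x n ≤ a) :
    glue F x a ≤ tv n := by
  unfold glue; split
  case isTrue ha =>
    have hNa := ofs_find_le ha
    have hN : n ≤ Nat.find ha := by
      by_contra hlt
      have : Nat.find ha + 1 ≤ n := by omega
      exact absurd (lt_of_lt_of_le (Nat.find_spec ha) (ofs_mono x this)) (not_lt.mpr hn)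
    have hsub : a - ofs x (Nat.find ha) < elen (x (Nat.find ha)) := by
      have := Nat.find_spec ha
      rw [ofs] at this
      rw [Ordinal.sub_lt_of_le hNa]
      exact this
    exact le_trans (blk_bounds (hx _) hsub).2 (tv_antitone hN)
  case isFalse => exact le_of_lt (tv_pos n)

lemma sub_lt_elen {x : ℕ → Ordinal} {a : Ordinal} (ha : ∃ n, a < ofs x (n+1)) :
    a - ofs x (Nat.find ha) < elen (x (Nat.find ha)) := by
  have h := Nat.find_spec ha
  rw [ofs] at h
  exact (Ordinal.sub_lt_of_le (ofs_find_le ha)).mpr h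

lemma glue_mem {F : ℕ → Ordinal → ℝ} {x : ℕ → Ordinal}
    (hx : ∀ k, IsDSeqLen (F k) (x k)) (a : Ordinal) :
    glue F x a ∈ Set.Icc (0:ℝ) 1 := by
  unfold glue; split
  case isTrue ha =>
    have hb := blk_bounds (n := Nat.find ha) (hx _) (sub_lt_elen ha)
    exact ⟨le_of_lt (lt_trans (tv_pos _) hb.1), le_trans hb.2 (tv_le_one _)⟩
  case isFalse => simp

lemma glue_sup_le_zero {F : ℕ → Ordinal → ℝ} {x : ℕ → Ordinal} {a : Ordinal}
    (ha : (iSup fun n => ofs x n) ≤ a) : glue F x a = 0 := by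
  rw [glue, dif_neg]
  rintro ⟨n, hn⟩
  exact absurd (lt_of_lt_of_le hn (le_trans (Ordinal.le_iSup (fun n => ofs x n) (n+1)) ha)) (lt_irrefl a)

lemma glue_strict {F : ℕ → Ordinal → ℝ} {x : ℕ → Ordinal}
    (hx : ∀ k, IsDSeqLen (F k) (x k)) {a b : Ordinal} (hab : a < b)
    (hb : b ≤ (iSup fun n => ofs x n)) : glue F x b < glue F x a := by
  have haS : a < iSup fun n => ofs x n := lt_of_lt_of_le hab hb
  have ha : ∃ n, a < ofs x (n+1) := by
    rcases Ordinal.lt_iSup_iff.mp haS with ⟨n, hn⟩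
    exact ⟨n, lt_of_lt_of_le hn (ofs_mono x n.le_succ)⟩
  have hgla : glue F x a = blk (Nat.find ha) (F (Nat.find ha)) (x (Nat.find ha))
      (a - ofs x (Nat.find ha)) := by rw [glue, dif_pos ha]
  have hlow : tv (Nat.find ha + 1) < glue F x a := by
    rw [hgla]; exact (blk_bounds (hx _) (sub_lt_elen ha)).1
  by_cases hbb : ∃ n, b < ofs x (n+1)
  · have hglb : glue F x b = blk (Nat.find hbb) (F (Nat.find hbb)) (x (Nat.find hbb))
        (b - ofs x (Nat.find hbb)) := by rw [glue, dif_pos hbb]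
    have hNM : Nat.find ha ≤ Nat.find hbb :=
      Nat.find_min' ha (lt_trans hab (Nat.find_spec hbb))
    rcases eq_or_lt_of_le hNM with heq | hltNM
    · -- same block
      have h1 : ofs x (Nat.find ha) ≤ a := ofs_find_le ha
      have h2 := ofs_find_le hbb
      have hlt := sub_lt_elen hbb
      rw [← heq] at h2 hlt hglb
      have hsub : a - ofs x (Nat.find ha) < b - ofs x (Nat.find ha) := by
        have e1 := Ordinal.add_sub_cancel_of_le h1
        have e2 := Ordinal.add_sub_cancel_of_le h2
        apply (add_lt_add_iff_left (ofs x (Nat.find ha))).mp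
        rw [e1, e2]; exact hab
      rw [hgla, hglb]
      exact blk_strict (hx _) hsub hlt
    · -- later block
      have hub : glue F x b ≤ tv (Nat.find hbb) := by
        rw [hglb]; exact (blk_bounds (hx _) (sub_lt_elen hbb)).2
      exact lt_of_le_of_lt (le_trans hub (tv_antitone hltNM)) hlow
  · rw [glue, dif_neg hbb]
    exact lt_trans (tv_pos _) hlow

lemma glue_isDSeqLen {F : ℕ → Ordinal → ℝ} {x : ℕ → Ordinal}
    (hx : ∀ k, IsDSeqLen (F k) (x k)) :
    IsDSeqLen (glue F x) (iSup fun n => ofs x n) := by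
  refine ⟨?_, glue_mem hx, fun a b hab hb => glue_strict hx hab hb,
    fun a ha => glue_sup_le_zero ha⟩
  apply Ordinal.iSup_lt_ord_lift
  · rw [Cardinal.isRegular_aleph_one.cof_eq, Cardinal.mk_nat, Cardinal.lift_aleph0]
    exact Cardinal.aleph0_lt_aleph_one
  · exact ofs_lt_omega1 x fun n => (hx n).1

/-- Trichotomy for the first difference of two decreasing sequences. -/
lemma cases3 {f g : Ordinal → ℝ} {ξ ξ' : Ordinal}
    (hf : IsDSeqLen f ξ) (hg : IsDSeqLen g ξ') (A : AltLex f g) :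
    (dOrd f g < ξ ∧ dOrd f g < ξ') ∨
    (dOrd f g = ξ ∧ dOrd f g < ξ' ∧ OrdEven (dOrd f g)) ∨
    (dOrd f g = ξ' ∧ dOrd f g < ξ ∧ ¬ OrdEven (dOrd f g)) := by
  set δ := dOrd f g with hδ
  have hne : f ≠ g := A.1
  have hdiff : f δ ≠ g δ := dOrd_ne hne
  have hδξ : δ ≤ ξ := by
    by_contra hlt
    push_neg at hlt
    have hgξ : g ξ = 0 := by
      rw [← dOrd_min (f := f) (g := g) hlt, hf.2.2.2 ξ le_rfl]
    have hξ'ξ : ξ' ≤ ξ := by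
      by_contra hl2
      push_neg at hl2
      have := hg.2.2.1 ξ ξ' hl2 le_rfl
      rw [hgξ] at this
      exact absurd this (not_lt.mpr (hg.2.1 ξ').1)
    apply hne
    funext a
    rcases lt_or_ge a ξ with h | h
    · exact dOrd_min (lt_trans h hlt)
    · rw [hf.2.2.2 a h, hg.2.2.2 a (le_trans hξ'ξ h)]
  have hδξ' : δ ≤ ξ' := by
    by_contra hlt
    push_neg at hlt
    have hfξ' : f ξ' = 0 := by
      rw [dOrd_min (f := f) (g := g) hlt, hg.2.2.2 ξ' le_rfl]
    have hξξ' : ξ ≤ ξ' := by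
      by_contra hl2
      push_neg at hl2
      have := hf.2.2.1 ξ' ξ hl2 le_rfl
      rw [hfξ'] at this
      exact absurd this (not_lt.mpr (hf.2.1 ξ).1)
    apply hne
    funext a
    rcases lt_or_ge a ξ' with h | h
    · exact dOrd_min (lt_trans h hlt)
    · rw [hf.2.2.2 a (le_trans hξξ' h), hg.2.2.2 a h]
  rcases eq_or_lt_of_le hδξ with he1 | hl1 <;> rcases eq_or_lt_of_le hδξ' with he2 | he2
  · -- δ = ξ = ξ' : both zero, contradiction
    exfalso
    apply hdiff
    rw [hf.2.2.2 δ he1.ge, hg.2.2.2 δ he2.ge]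
  · -- δ = ξ < ξ' : f δ = 0 < g δ, so even
    refine Or.inr (Or.inl ⟨he1, he2, ?_⟩)
    have hf0 : f δ = 0 := hf.2.2.2 δ he1.ge
    have hg0 : 0 < g δ := by
      exact lt_of_le_of_ne (hg.2.1 δ).1 (by rw [← hf0]; exact hdiff)
    rcases A.2 with ⟨hev, _⟩ | ⟨_, hlt2⟩
    · exact hev
    · exfalso; rw [hf0] at hlt2; linarith
  · -- δ = ξ' < ξ : g δ = 0 < f δ, so odd
    refine Or.inr (Or.inr ⟨he2, hl1, ?_⟩)
    have hg0 : g δ = 0 := hg.2.2.2 δ he2.ge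
    have hf0 : 0 < f δ := by
      have h1 := hf.2.2.1 δ ξ hl1 le_rfl
      have h2 := hf.2.2.2 ξ le_rfl
      linarith [(hf.2.1 δ).1]
    rcases A.2 with ⟨hev, hlt2⟩ | ⟨hodd, _⟩
    · exfalso; rw [hg0] at hlt2; linarith
    · exact hodd
  · exact Or.inl ⟨hl1, he2⟩

lemma ofs_congr {x x' : ℕ → Ordinal} {n : ℕ} (hag : ∀ m, m < n → x m = x' m) :
    ∀ k, k ≤ n → ofs x k = ofs x' k
  | 0, _ => rfl
  | k+1, hk => by
    rw [ofs, ofs, ofs_congr hag k (by omega), hag k (by omega)]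

lemma glue_altlex {F F' : ℕ → Ordinal → ℝ} {x x' : ℕ → Ordinal} {n : ℕ}
    (hF : ∀ k, IsDSeqLen (F k) (x k)) (hF' : ∀ k, IsDSeqLen (F' k) (x' k))
    (hagF : ∀ m, m < n → F m = F' m) (hagx : ∀ m, m < n → x m = x' m)
    (A : AltLex (F n) (F' n)) : AltLex (glue F x) (glue F' x') := by
  set δ := dOrd (F n) (F' n) with hδ
  have hofs : ∀ k, k ≤ n → ofs x k = ofs x' k := ofs_congr hagx
  set c := ofs x n + δ with hc
  have htri := cases3 (hF n) (hF' n) A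
  rw [← hδ] at htri
  have hδx : δ ≤ x n := by
    rcases htri with ⟨h1, _⟩ | ⟨h1, _, _⟩ | ⟨_, h2, _⟩
    exacts [h1.le, h1.le, h2.le]
  have hδx' : δ ≤ x' n := by
    rcases htri with ⟨_, h2⟩ | ⟨_, h2, _⟩ | ⟨h1, _, _⟩
    exacts [h2.le, h2.le, h1.le]
  -- sequences agree strictly below `c`
  have heqb : ∀ e, e < c → glue F x e = glue F' x' e := by
    intro e he
    rcases lt_or_ge e (ofs x n) with hlt | hge
    · have hex : ∃ k, e < ofs x (k+1) := ⟨n, lt_of_lt_of_le hlt (ofs_mono x n.le_succ)⟩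
      have hk2 : e < ofs x (Nat.find hex + 1) := Nat.find_spec hex
      have hk1 : ofs x (Nat.find hex) ≤ e := ofs_find_le hex
      have hkn : Nat.find hex < n := by
        by_contra hh
        push_neg at hh
        exact absurd (le_trans (ofs_mono x hh) hk1) (not_le.mpr hlt)
      have e1 : glue F x e = blk (Nat.find hex) (F (Nat.find hex)) (x (Nat.find hex))
          (e - ofs x (Nat.find hex)) := glue_block hk1 hk2
      have e2 : glue F' x' e = blk (Nat.find hex) (F' (Nat.find hex)) (x' (Nat.find hex))
          (e - ofs x' (Nat.find hex)) := glue_block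
        (by rw [← hofs _ hkn.le]; exact hk1)
        (by rw [← hofs _ hkn]; exact hk2)
      rw [e1, e2, ← hagF _ hkn, ← hagx _ hkn, ← hofs _ hkn.le]
    · have hlt1 : e < ofs x (n+1) := by
        rw [ofs]
        exact lt_of_lt_of_le he (add_le_add_right (le_trans hδx (le_elen _)) _)
      have e1 : glue F x e = blk n (F n) (x n) (e - ofs x n) := glue_block hge hlt1
      have hlt1' : e < ofs x' (n+1) := by
        rw [ofs, ← hofs n le_rfl]
        exact lt_of_lt_of_le he (add_le_add_right (le_trans hδx' (le_elen _)) _)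
      have e2 : glue F' x' e = blk n (F' n) (x' n) (e - ofs x' n) :=
        glue_block (by rw [← hofs n le_rfl]; exact hge) hlt1'
      have hsubδ : e - ofs x n < δ := (Ordinal.sub_lt_of_le hge).mpr he
      have hd1 : e - ofs x n < x n := lt_of_lt_of_le hsubδ hδx
      have hd2 : e - ofs x n < x' n := lt_of_lt_of_le hsubδ hδx'
      rw [e1, e2, ← hofs n le_rfl, blk, blk, if_pos hd1, if_pos hd2,
        dOrd_min (f := F n) (g := F' n) (by rw [← hδ]; exact hsubδ)]
  have hpar : c % 2 = δ % 2 := even_add (ofs_even x n) δ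
  have hoc : ofs x n ≤ c := le_self_add
  have hoc' : ofs x' n ≤ c := by rw [← hofs n le_rfl]; exact hoc
  -- value comparison at `c`
  have hord : (OrdEven δ ∧ glue F x c < glue F' x' c) ∨
      (¬ OrdEven δ ∧ glue F' x' c < glue F x c) := by
    rcases htri with ⟨h1, h2⟩ | ⟨h1, h2, h3⟩ | ⟨h1, h2, h3⟩
    · -- generic case: both blocks defined at δ
      have g1 : glue F x c = blk n (F n) (x n) (c - ofs x n) :=
        glue_block hoc (by rw [ofs]; exact add_lt_add_right (lt_of_lt_of_le h1 (le_elen _)) _)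
      have g2 : glue F' x' c = blk n (F' n) (x' n) (c - ofs x' n) :=
        glue_block hoc' (by
          rw [ofs, ← hofs n le_rfl]
          exact add_lt_add_right (lt_of_lt_of_le h2 (le_elen _)) _)
      have hsub : c - ofs x n = δ := by rw [hc, Ordinal.add_sub_cancel]
      have hsub' : c - ofs x' n = δ := by rw [← hofs n le_rfl, hc, Ordinal.add_sub_cancel]
      rw [g1, g2, hsub, hsub', blk, blk, if_pos h1, if_pos h2]
      rcases A.2 with ⟨hev, hlt⟩ | ⟨hodd, hlt⟩
      · exact Or.inl ⟨hev, TT_strictMono n hlt⟩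
      · exact Or.inr ⟨hodd, TT_strictMono n hlt⟩
    · -- x-sequence ends at δ, even
      have hxe : elen (x n) = x n := by rw [elen, if_pos (h1 ▸ h3)]
      have hce : c = ofs x (n+1) := by rw [ofs, hxe, hc, h1]
      have gub : glue F x c ≤ tv (n+1) := glue_le hF (le_of_eq hce.symm)
      have g2 : glue F' x' c = blk n (F' n) (x' n) (c - ofs x' n) :=
        glue_block hoc' (by
          rw [ofs, ← hofs n le_rfl]
          exact add_lt_add_right (lt_of_lt_of_le h2 (le_elen _)) _)
      have hsub' : c - ofs x' n = δ := by rw [← hofs n le_rfl, hc, Ordinal.add_sub_cancel]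
      have hpos : 0 < F' n δ := by
        have ha := (hF' n).2.2.1 δ (x' n) h2 le_rfl
        have hb := (hF' n).2.2.2 (x' n) le_rfl
        linarith
      have : glue F' x' c = TT n (F' n δ) := by rw [g2, hsub', blk, if_pos h2]
      refine Or.inl ⟨h3, ?_⟩
      rw [this]
      calc glue F x c ≤ tv (n+1) := gub
        _ < qv n := tv_lt_qv n
        _ < sv n := qv_lt_sv n
        _ < TT n (F' n δ) := sv_lt_TT n hpos
    · -- x'-sequence ends at δ, odd
      have hodd : x' n % 2 = 1 := by
        rcases mod2_cases (x' n) with hp | hp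
        · exact absurd (h1 ▸ hp) h3
        · exact hp
      have hxe : elen (x' n) = x' n + 1 := by
        rw [elen, if_neg (by rw [hodd]; exact one_ne_zero)]
      have g1 : glue F x c = blk n (F n) (x n) (c - ofs x n) :=
        glue_block hoc (by rw [ofs]; exact add_lt_add_right (lt_of_lt_of_le h2 (le_elen _)) _)
      have hsub : c - ofs x n = δ := by rw [hc, Ordinal.add_sub_cancel]
      have g2 : glue F' x' c = blk n (F' n) (x' n) (c - ofs x' n) :=
        glue_block hoc' (by
          rw [ofs, ← hofs n le_rfl, hxe]
          exact add_lt_add_right (by rw [h1]; exact lt_add_one (x' n) : δ < x' n + 1) _)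
      have hsub' : c - ofs x' n = δ := by rw [← hofs n le_rfl, hc, Ordinal.add_sub_cancel]
      have hpos : 0 < F n δ := by
        have ha := (hF n).2.2.1 δ (x n) h2 le_rfl
        have hb := (hF n).2.2.2 (x n) le_rfl
        linarith
      have hv2 : glue F' x' c = qv n := by
        rw [g2, hsub', blk, if_neg (by rw [h1]; exact lt_irrefl _)]
      have hv1 : glue F x c = TT n (F n δ) := by rw [g1, hsub, blk, if_pos h2]
      refine Or.inr ⟨h3, ?_⟩
      rw [hv1, hv2]
      exact lt_trans (qv_lt_sv n) (sv_lt_TT n hpos)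
  have hne_c : glue F x c ≠ glue F' x' c := by
    rcases hord with ⟨_, hlt⟩ | ⟨_, hlt⟩
    · exact ne_of_lt hlt
    · exact (ne_of_lt hlt).symm
  have hdOrd : dOrd (glue F x) (glue F' x') = c := dOrd_eq hne_c heqb
  refine ⟨Function.ne_iff.mpr ⟨c, hne_c⟩, ?_⟩
  rw [hdOrd]
  rcases hord with ⟨hev, hlt⟩ | ⟨hodd, hlt⟩
  · exact Or.inl ⟨show c % 2 = 0 by rw [hpar]; exact hev, hlt⟩
  · exact Or.inr ⟨show ¬ c % 2 = 0 by rw [hpar]; exact hodd, hlt⟩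


/-! ### Universe transfer -/

lemma lift_omega1 : Ordinal.lift.{v, u} ((Cardinal.aleph 1).ord : Ordinal.{u}) =
    ((Cardinal.aleph 1).ord : Ordinal.{max u v}) := by
  rw [Cardinal.lift_ord, Cardinal.lift_aleph, Ordinal.lift_one]

lemma exists_down {a : Ordinal.{v}} (ha : a < (Cardinal.aleph 1).ord) :
    ∃ b : Ordinal.{u}, Ordinal.lift.{v} b = Ordinal.lift.{u} a := by
  apply Ordinal.mem_range_lift_of_le
  rw [lift_omega1.{u, v}]
  exact le_of_lt (calc Ordinal.lift.{u} a
      < Ordinal.lift.{u} ((Cardinal.aleph 1).ord : Ordinal.{v}) := Ordinal.lift_lt.mpr ha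
    _ = ((Cardinal.aleph 1).ord : Ordinal.{max u v}) := lift_omega1.{v, u})

lemma down_lt_omega1 {a : Ordinal.{v}} {b : Ordinal.{u}}
    (hb : Ordinal.lift.{v} b = Ordinal.lift.{u} a) (h : b < (Cardinal.aleph 1).ord) :
    a < (Cardinal.aleph 1).ord := by
  have h2 := Ordinal.lift_lt.{v, u}.mpr h
  rw [hb, lift_omega1.{u, v}, ← lift_omega1.{v, u}] at h2
  exact Ordinal.lift_lt.mp h2

lemma lift_mod2 (a : Ordinal.{u}) :
    Ordinal.lift.{v} a % 2 = Ordinal.lift.{v} (a % 2) := by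
  conv_lhs => rw [← Ordinal.div_add_mod a 2]
  rw [Ordinal.lift_add, Ordinal.lift_mul,
    show Ordinal.lift.{v} (2 : Ordinal.{u}) = 2 from Ordinal.lift_ofNat 2,
    Ordinal.mul_add_mod_self]
  apply Ordinal.mod_eq_of_lt
  calc Ordinal.lift.{v} (a % 2) < Ordinal.lift.{v} 2 :=
        Ordinal.lift_lt.mpr (Ordinal.mod_lt a (by norm_num))
    _ = 2 := Ordinal.lift_ofNat 2

lemma even_lift {a : Ordinal.{u}} :
    Ordinal.lift.{v} a % 2 = 0 ↔ a % 2 = 0 := by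
  rw [lift_mod2, show (0 : Ordinal.{max u v}) = Ordinal.lift.{v} (0 : Ordinal.{u}) from
    Ordinal.lift_zero.symm, Ordinal.lift_inj]

open Classical in
def trans (f : Ordinal.{u} → ℝ) (a : Ordinal.{v}) : ℝ :=
  if h : ∃ b : Ordinal.{u}, Ordinal.lift.{v} b = Ordinal.lift.{u} a then f h.choose else 0

lemma trans_eq {f : Ordinal.{u} → ℝ} {a : Ordinal.{v}} {b : Ordinal.{u}}
    (hb : Ordinal.lift.{v} b = Ordinal.lift.{u} a) : trans f a = f b := by
  have hex : ∃ b' : Ordinal.{u}, Ordinal.lift.{v} b' = Ordinal.lift.{u} a := ⟨b, hb⟩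
  rw [trans, dif_pos hex]
  congr 1
  exact Ordinal.lift_inj.mp (hex.choose_spec.trans hb.symm)

lemma isDSeqLen_trans {f : Ordinal.{u} → ℝ} {ξ : Ordinal.{u}} (hf : IsDSeqLen f ξ)
    {ξ' : Ordinal.{v}} (hξ : Ordinal.lift.{v} ξ = Ordinal.lift.{u} ξ') :
    IsDSeqLen (trans f) ξ' := by
  refine ⟨down_lt_omega1 hξ hf.1, ?_, ?_, ?_⟩
  · intro a
    rw [trans]
    split
    · exact hf.2.1 _
    · exact ⟨le_rfl, by norm_num⟩
  · intro a b hab hb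
    have hb1 : b < (Cardinal.aleph 1).ord :=
      lt_of_le_of_lt hb (down_lt_omega1 hξ hf.1)
    obtain ⟨b', hb'⟩ := exists_down hb1
    obtain ⟨a', ha'⟩ := exists_down (lt_trans hab hb1)
    rw [trans_eq hb', trans_eq ha']
    apply hf.2.2.1
    · rw [← Ordinal.lift_lt.{v, u}, ha', hb']
      exact Ordinal.lift_lt.mpr hab
    · rw [← Ordinal.lift_le.{v, u}, hb', hξ]
      exact Ordinal.lift_le.mpr hb
  · intro a ha
    rw [trans]
    split
    case isTrue hex =>
      apply hf.2.2.2
      rw [← Ordinal.lift_le.{v, u}, hξ, hex.choose_spec]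
      exact Ordinal.lift_le.mpr ha
    case isFalse => rfl

lemma altLex_trans {f g : Ordinal.{u} → ℝ} {ξ ζ : Ordinal.{u}}
    (hf : IsDSeqLen f ξ) (hg : IsDSeqLen g ζ) (A : AltLex f g) :
    AltLex (trans.{u, v} f) (trans.{u, v} g) := by
  have hδξ : dOrd f g ≤ ξ := by
    rcases cases3 hf hg A with ⟨h1, _⟩ | ⟨h1, _, _⟩ | ⟨_, h2, _⟩
    exacts [h1.le, h1.le, h2.le]
  have hδω : dOrd f g < (Cardinal.aleph 1).ord := lt_of_le_of_lt hδξ hf.1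
  obtain ⟨δ', hδ'⟩ : ∃ b : Ordinal.{v},
      Ordinal.lift.{u} b = Ordinal.lift.{v} (dOrd f g) := exists_down hδω
  have hδ'2 : Ordinal.lift.{v} (dOrd f g) = Ordinal.lift.{u} δ' := hδ'.symm
  have hv1 : trans.{u, v} f δ' = f (dOrd f g) := trans_eq hδ'2
  have hv2 : trans.{u, v} g δ' = g (dOrd f g) := trans_eq hδ'2
  have hnec : trans.{u, v} f δ' ≠ trans.{u, v} g δ' := by
    rw [hv1, hv2]
    exact dOrd_ne A.1
  have hδ'ω : δ' < (Cardinal.aleph 1).ord := down_lt_omega1 hδ'2 hδω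
  have hd : dOrd (trans.{u, v} f) (trans.{u, v} g) = δ' := by
    apply dOrd_eq hnec
    intro e he
    obtain ⟨e', he'⟩ := exists_down (lt_trans he hδ'ω)
    rw [trans_eq he', trans_eq he']
    apply dOrd_min (f := f) (g := g)
    rw [← Ordinal.lift_lt.{v, u}, he', hδ'2]
    exact Ordinal.lift_lt.mpr he
  have hpar : OrdEven δ' ↔ OrdEven (dOrd f g) := by
    unfold OrdEven
    constructor
    · intro hc
      have h2 := even_lift.mpr hc
      rw [hδ'] at h2
      exact even_lift.mp h2
    · intro hc
      have h2 := even_lift.mpr hc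
      rw [← hδ'] at h2
      exact even_lift.mp h2
  refine ⟨Function.ne_iff.mpr ⟨δ', hnec⟩, ?_⟩
  rw [hd]
  rcases A.2 with ⟨hev, hlt⟩ | ⟨hodd, hlt⟩
  · exact Or.inl ⟨hpar.mpr hev, by rw [hv1, hv2]; exact hlt⟩
  · exact Or.inr ⟨fun hc => hodd (hpar.mp hc), by rw [hv1, hv2]; exact hlt⟩

lemma transfer {L : Type} [LinearOrder L]
    (hL : ∃ Ψ : L → Ordinal.{u} → ℝ, (∀ p, IsDSeq (Ψ p)) ∧
      ∀ p q : L, p < q → AltLex (Ψ p) (Ψ q)) :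
    ∃ Ψ : L → Ordinal.{v} → ℝ, (∀ p, IsDSeq (Ψ p)) ∧
      ∀ p q : L, p < q → AltLex (Ψ p) (Ψ q) := by
  obtain ⟨Ψ, h1, h2⟩ := hL
  choose len hlen using h1
  refine ⟨fun p => trans (Ψ p), fun p => ?_,
    fun p q hpq => altLex_trans (hlen p) (hlen q) (h2 p q hpq)⟩
  obtain ⟨ξ', hξ'⟩ := exists_down (hlen p).1
  exact ⟨ξ', isDSeqLen_trans (hlen p) hξ'.symm⟩

end S15

theorem stmt_15 (L : ℕ → Type) [∀ n, LinearOrder (L n)]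
    (h : ∀ n, ∃ Ψ : L n → Ordinal → ℝ, (∀ p, IsDSeq (Ψ p)) ∧
      ∀ p q : L n, p < q → AltLex (Ψ p) (Ψ q)) :
    ∃ Φ : (∀ n, L n) → Ordinal → ℝ, (∀ x, IsDSeq (Φ x)) ∧
      ∀ (x y : ∀ n, L n) (n : ℕ), (∀ m, m < n → x m = y m) → x n < y n →
        AltLex (Φ x) (Φ y) := by
  replace h := fun n => S15.transfer (h n)
  choose Ψ hΨ hmono using h
  choose len hlen using fun n p => hΨ n p
  refine ⟨fun x => S15.glue (fun k => Ψ k (x k)) (fun k => len k (x k)), ?_, ?_⟩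
  · intro x
    exact ⟨_, S15.glue_isDSeqLen (fun k => hlen k (x k))⟩
  · intro x y n hag hlt
    exact S15.glue_altlex (fun k => hlen k (x k)) (fun k => hlen k (y k))
      (fun m hm => show Ψ m (x m) = Ψ m (y m) by rw [hag m hm])
      (fun m hm => show len m (x m) = len m (y m) by rw [hag m hm])
      (hmono n (x n) (y n) hlt)
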